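/- arXiv:1507.01622 — 2 statements merged into one kernel-verified Lean document; each statement's English description precedes it below -/
import Mathlib

section
/- Let α > −1, let q ≥ 0 be an integer, and let n ≥ 1 be an integer. Then for every real x, P_{2n}^{α,q}(x) − P_{2n}^{α+1,q}(x) = γ_{2n}^{α,q} · P_{2n−2}^{α+1,q}(x), where γ_{2n}^{α,q} = −2 n (2n+2q+1) / [(4n+2α+2q+1)(4n+2α+2q+3)]. -/
open MeasureTheory intervalIntegral Polynomial

/-- Pochhammer symbol `(a)_k = a (a+1) ⋯ (a+k-1)`. -/
noncomputable def poch (a : ℝ) (k : ℕ) : ℝ := ∏ i ∈ Finset.range k, (a + i)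

/-- `Peven α q n x = P_{2n}^{α,q}(x)`, the monic generalized Gegenbauer-type polynomial
`Σ_{k=0}^{n} (−n)_k (−n−q−1/2)_k / (k! (−2n−α−q−1/2)_k) x^{2n−2k}`. -/
noncomputable def Peven (α : ℝ) (q n : ℕ) (x : ℝ) : ℝ :=
  ∑ k ∈ Finset.range (n + 1),
    poch (-(n : ℝ)) k * poch (-(n : ℝ) - q - 1/2) k /
      ((Nat.factorial k : ℝ) * poch (-(2 * (n : ℝ)) - α - q - 1/2) k) * x ^ (2*n - 2*k)

/-- `Podd α q n x = P_{2n+1}^{α,q}(x) = (1+x) P_{2n}^{α+1,q}(x)`. -/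
noncomputable def Podd (α : ℝ) (q n : ℕ) (x : ℝ) : ℝ := (1 + x) * Peven (α + 1) q n x

/-- `P α q n x = P_n^{α,q}(x)`. -/
noncomputable def P (α : ℝ) (q : ℕ) (n : ℕ) (x : ℝ) : ℝ :=
  if Even n then Peven α q (n / 2) x else Podd α q (n / 2) x


lemma poch_succ (a : ℝ) (k : ℕ) : poch a (k+1) = poch a k * (a + k) := by
  simp [poch, Finset.prod_range_succ]

lemma poch_succ_left (a : ℝ) (k : ℕ) : poch a (k+1) = a * poch (a+1) k := by
  rw [poch, Finset.prod_range_succ']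
  rw [mul_comm]
  congr 1
  · norm_num
  · rw [poch]; apply Finset.prod_congr rfl; intro i _; push_cast; ring

lemma poch_ne_zero (a : ℝ) (k : ℕ) (h : ∀ i : ℕ, i < k → a + i ≠ 0) : poch a k ≠ 0 := by
  rw [poch, Finset.prod_ne_zero_iff]
  intro i hi
  exact h i (Finset.mem_range.mp hi)

lemma key (α : ℝ) (hα : -1 < α) (qr : ℝ) (hq : 0 ≤ qr) (m i : ℕ) (hi : i ≤ m) :
    poch (-((m:ℝ)+1)) (i+1) * poch (-((m:ℝ)+1) - qr - 1/2) (i+1) /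
        ((Nat.factorial (i+1) : ℝ) * poch (-(2*((m:ℝ)+1)) - α - qr - 1/2) (i+1))
      - poch (-((m:ℝ)+1)) (i+1) * poch (-((m:ℝ)+1) - qr - 1/2) (i+1) /
        ((Nat.factorial (i+1) : ℝ) * poch (-(2*((m:ℝ)+1)) - (α+1) - qr - 1/2) (i+1))
      = (-2 * ((m:ℝ)+1) * (2*((m:ℝ)+1) + 2*qr + 1) /
          ((4*((m:ℝ)+1) + 2*α + 2*qr + 1) * (4*((m:ℝ)+1) + 2*α + 2*qr + 3)))
        * (poch (-(m:ℝ)) i * poch (-(m:ℝ) - qr - 1/2) i /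
          ((Nat.factorial i : ℝ) * poch (-(2*(m:ℝ)) - (α+1) - qr - 1/2) i)) := by
  set b : ℝ := -(2*((m:ℝ)+1)) - α - qr - 1/2 with hbdef
  have e1 : -(2*((m:ℝ)+1)) - (α+1) - qr - 1/2 = b - 1 := by rw [hbdef]; ring
  have e2 : -(2*(m:ℝ)) - (α+1) - qr - 1/2 = b + 1 := by rw [hbdef]; ring
  rw [e1, e2]
  have hm : (0:ℝ) ≤ (m:ℝ) := Nat.cast_nonneg m
  have hneg : ∀ s : ℕ, s ≤ m → b + s < 0 := by
    intro s hs
    have hs' : (s:ℝ) ≤ (m:ℝ) := Nat.cast_le.mpr hs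
    rw [hbdef]; linarith
  have hb : b < 0 := by have := hneg 0 (Nat.zero_le m); simpa using this
  have hb0 : b ≠ 0 := hb.ne
  have hb1 : b - 1 ≠ 0 := by linarith
  have hbi : b + (i:ℝ) ≠ 0 := (hneg i hi).ne
  have hD : poch (b+1) i ≠ 0 := by
    apply poch_ne_zero
    intro t ht
    have h := hneg (t+1) (by omega)
    push_cast at h
    intro hcon; apply h.ne; linarith
  have hF : ((Nat.factorial i : ℝ)) ≠ 0 := by
    exact_mod_cast (Nat.factorial_pos i).ne'
  have h1 : poch (-((m:ℝ)+1)) (i+1) = (-((m:ℝ)+1)) * poch (-(m:ℝ)) i := by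
    rw [poch_succ_left, show (-((m:ℝ)+1)+1) = -(m:ℝ) by ring]
  have h2 : poch (-((m:ℝ)+1) - qr - 1/2) (i+1)
      = (-((m:ℝ)+1) - qr - 1/2) * poch (-(m:ℝ) - qr - 1/2) i := by
    rw [poch_succ_left, show (-((m:ℝ)+1) - qr - 1/2 + 1) = -(m:ℝ) - qr - 1/2 by ring]
  have h3 : poch b (i+1) = b * poch (b+1) i := poch_succ_left b i
  have h4 : poch (b-1) (i+1) = (b-1) * poch b i := by
    rw [poch_succ_left, show (b-1+1) = b by ring]
  have hPbeq : poch b i = b * poch (b+1) i / (b + i) := by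
    rw [eq_div_iff hbi, ← poch_succ, poch_succ_left]
  have hfac : ((Nat.factorial (i+1) : ℝ)) = ((i:ℝ)+1) * (Nat.factorial i : ℝ) := by
    rw [Nat.factorial_succ]; push_cast; ring
  have hi1 : ((i:ℝ)+1) ≠ 0 := by positivity
  have hden1 : (4*((m:ℝ)+1) + 2*α + 2*qr + 1) ≠ 0 := by nlinarith
  have hden2 : (4*((m:ℝ)+1) + 2*α + 2*qr + 3) ≠ 0 := by nlinarith
  rw [h1, h2, h3, h4, hPbeq, hfac]
  rw [show (4*((m:ℝ)+1) + 2*α + 2*qr + 1) = -2*b by rw [hbdef]; ring,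
    show (4*((m:ℝ)+1) + 2*α + 2*qr + 3) = -2*(b-1) by rw [hbdef]; ring]
  field_simp
  ring

/-- `P_{2n}^{α,q}(x) − P_{2n}^{α+1,q}(x) = γ_{2n}^{α,q} P_{2n−2}^{α+1,q}(x)` with
`γ_{2n}^{α,q} = −2n(2n+2q+1)/((4n+2α+2q+1)(4n+2α+2q+3))`. -/
theorem gamma_even_relation (α : ℝ) (hα : -1 < α) (q : ℕ) (n : ℕ) (hn : 1 ≤ n) :
    ∀ x : ℝ,
      Peven α q n x - Peven (α + 1) q n x
        = (-2 * (n : ℝ) * (2 * (n : ℝ) + 2 * q + 1) /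
              ((4 * (n : ℝ) + 2 * α + 2 * q + 1) * (4 * (n : ℝ) + 2 * α + 2 * q + 3))) *
            Peven (α + 1) q (n - 1) x := by
  obtain ⟨m, rfl⟩ : ∃ m, n = m + 1 := ⟨n - 1, by omega⟩
  intro x
  have hc : ((m + 1 : ℕ) : ℝ) = (m : ℝ) + 1 := by push_cast; ring
  simp only [Peven, Nat.add_sub_cancel, hc]
  rw [← Finset.sum_sub_distrib, Finset.sum_range_succ', Finset.mul_sum]
  have h0 : (poch (-((m:ℝ)+1)) 0 * poch (-((m:ℝ)+1) - q - 1/2) 0 /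
      ((Nat.factorial 0 : ℝ) * poch (-(2*((m:ℝ)+1)) - α - q - 1/2) 0) * x ^ (2*(m+1) - 2*0)
      - poch (-((m:ℝ)+1)) 0 * poch (-((m:ℝ)+1) - q - 1/2) 0 /
      ((Nat.factorial 0 : ℝ) * poch (-(2*((m:ℝ)+1)) - (α+1) - q - 1/2) 0) * x ^ (2*(m+1) - 2*0)) = 0 := by
    simp [poch]
  rw [h0, add_zero]
  apply Finset.sum_congr rfl
  intro i hi
  have hi' : i ≤ m := by simpa [Nat.lt_succ_iff] using Finset.mem_range.mp hi
  have he : 2*(m+1) - 2*(i+1) = 2*m - 2*i := by omega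
  rw [he, ← sub_mul, key α hα (q:ℝ) (by positivity) m i hi']
  ring
end

section
/- Let α > −1, let q ≥ 0 and n ≥ 0 be integers. If Q is a real polynomial of degree 2n+1 such that ∫_{−1}^{1} x^{2q+1} (1−x²)^α (1−x) x^k Q(x) dx = 0 for all integers 0 ≤ k ≤ 2n, then Q(−1) = 0. In other words, the zero of the orthogonal polynomial of odd degree that Perron's theorem allows to leave (−1,1) is exactly the endpoint −1. -/
open MeasureTheory intervalIntegral Polynomial

open Set

private lemma weight_integrable' (α : ℝ) (hα : -1 < α) (g : ℝ → ℝ) (hg : Continuous g) :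
    IntervalIntegrable (fun x => (1 - x ^ 2) ^ α * g x) volume (-1) 1 := by
  have base : IntervalIntegrable (fun x : ℝ => x ^ α) volume 0 1 :=
    intervalIntegrable_rpow' hα
  have h1 : IntervalIntegrable (fun x : ℝ => (x + 1) ^ α) volume (-1) 0 := by
    simpa using base.comp_add_right 1
  have h2 : IntervalIntegrable (fun x : ℝ => (1 - x) ^ α) volume 0 1 := by
    simpa using (base.comp_sub_left 1).symm
  have c1 : ContinuousOn (fun x : ℝ => (1 - x) ^ α * g x) (uIcc (-1) 0) := by
    apply ContinuousOn.mul _ hg.continuousOn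
    intro x hx
    rw [uIcc_of_le (by norm_num)] at hx
    exact (ContinuousAt.comp (Real.continuousAt_rpow_const _ _
      (Or.inl (by nlinarith [hx.2]))) (by fun_prop)).continuousWithinAt
  have c2 : ContinuousOn (fun x : ℝ => (x + 1) ^ α * g x) (uIcc 0 1) := by
    apply ContinuousOn.mul _ hg.continuousOn
    intro x hx
    rw [uIcc_of_le (by norm_num)] at hx
    exact (ContinuousAt.comp (Real.continuousAt_rpow_const _ _
      (Or.inl (by nlinarith [hx.1]))) (by fun_prop)).continuousWithinAt
  have i1 : IntervalIntegrable (fun x : ℝ => (x + 1) ^ α * ((1 - x) ^ α * g x))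
      volume (-1) 0 := h1.mul_continuousOn c1
  have i2 : IntervalIntegrable (fun x : ℝ => (1 - x) ^ α * ((x + 1) ^ α * g x))
      volume 0 1 := h2.mul_continuousOn c2
  have i2' : IntervalIntegrable (fun x : ℝ => (x + 1) ^ α * ((1 - x) ^ α * g x))
      volume 0 1 := by
    have : (fun x : ℝ => (x + 1) ^ α * ((1 - x) ^ α * g x)) =
        fun x : ℝ => (1 - x) ^ α * ((x + 1) ^ α * g x) := by funext x; ring
    rw [this]; exact i2
  have itot := i1.trans i2'
  apply itot.congr_ae
  have hsub : uIoc (-1 : ℝ) 1 ⊆ Icc (-1) 1 := by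
    rw [uIoc_of_le (by norm_num : (-1:ℝ) ≤ 1)]; exact Ioc_subset_Icc_self
  refine (ae_restrict_iff' measurableSet_uIoc).2 (Filter.Eventually.of_forall ?_)
  intro x hx
  have hx' := hsub hx
  have h1x : (0:ℝ) ≤ 1 - x := by linarith [hx'.2]
  have h2x : (0:ℝ) ≤ x + 1 := by linarith [hx'.1]
  show (x + 1) ^ α * ((1 - x) ^ α * g x) = (1 - x ^ 2) ^ α * g x
  have hfac : (1 - x ^ 2 : ℝ) = (x + 1) * (1 - x) := by ring
  rw [hfac, Real.mul_rpow h2x h1x]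
  ring

private lemma odd_integral_zero (f : ℝ → ℝ) (hf : ∀ x, f (-x) = - f x) :
    ∫ x in (-1:ℝ)..1, f x = 0 := by
  have h := intervalIntegral.integral_comp_neg (a := (-1:ℝ)) (b := 1) f
  simp only [neg_neg] at h
  have h2 : ∫ x in (-1:ℝ)..1, f (-x) = ∫ x in (-1:ℝ)..1, (- f x) := by
    apply intervalIntegral.integral_congr
    intro x _; exact hf x
  rw [h2, intervalIntegral.integral_neg] at h
  linarith

/-- Perron's exceptional zero is the endpoint `−1`: any polynomial of degree `2n+1` orthogonal
to all lower powers with respect to the signed weight `x^{2q+1}(1−x²)^α(1−x)` vanishes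
at `−1`. -/
theorem perron_zero_at_minus_one (α : ℝ) (hα : -1 < α) (q n : ℕ) (Q : Polynomial ℝ)
    (hQd : Q.natDegree = 2 * n + 1)
    (hQ : ∀ k : ℕ, k ≤ 2 * n →
      ∫ x in (-1 : ℝ)..1,
        x ^ (2 * q + 1) * (1 - x ^ 2) ^ α * (1 - x) * x ^ k * Q.eval x = 0) :
    Q.eval (-1) = 0 := by
  set J : Polynomial ℝ := (1 - X) * Q - (1 + X) * (Q.comp (-X)) with hJ
  have hJeval : ∀ x : ℝ, J.eval x = (1 - x) * Q.eval x - (1 + x) * Q.eval (-x) := by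
    intro x; simp [hJ, eval_comp]
  -- degree bound
  have hdeg : J.natDegree ≤ 2 * n + 2 := by
    have hd1 : ((1 - X : ℝ[X]) * Q).natDegree ≤ 2 * n + 2 := by
      refine natDegree_mul_le.trans ?_
      have : (1 - X : ℝ[X]).natDegree ≤ 1 := by compute_degree
      omega
    have hd2 : ((1 + X : ℝ[X]) * Q.comp (-X)).natDegree ≤ 2 * n + 2 := by
      refine natDegree_mul_le.trans ?_
      have h1 : (1 + X : ℝ[X]).natDegree ≤ 1 := by compute_degree
      have h2 : (Q.comp (-X)).natDegree ≤ 2 * n + 1 := by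
        refine natDegree_comp_le.trans ?_
        have : (-X : ℝ[X]).natDegree ≤ 1 := by compute_degree
        nlinarith [Q.natDegree.le_refl]
      omega
    exact (natDegree_sub_le _ _).trans (max_le hd1 hd2)
  -- the key orthogonality relations
  have key : ∀ m : ℕ, m ≤ 2 * n + 2 →
      ∫ x in (-1:ℝ)..1, (1 - x ^ 2) ^ α * (x ^ (2 * q + m) * J.eval x) = 0 := by
    intro m hm
    rcases Nat.even_or_odd m with ⟨i, hi⟩ | ⟨i, hi⟩
    · -- even: integrand is odd
      apply odd_integral_zero
      intro x
      have hJodd : J.eval (-x) = - J.eval x := by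
        rw [hJeval (-x), hJeval x, neg_neg]; ring
      have hpow : (-x) ^ (2 * q + m) = x ^ (2 * q + m) := by
        rw [hi]; rw [show 2 * q + (i + i) = 2 * (q + i) by ring]
        rw [pow_mul, pow_mul, neg_sq]
      rw [hJodd, show ((-x:ℝ)) ^ 2 = x ^ 2 from neg_sq x, hpow]
      ring
    · -- odd: m = 2i+1, i ≤ n
      have hin : i ≤ n := by omega
      set φ : ℝ → ℝ :=
        fun x => (1 - x ^ 2) ^ α * (x ^ (2 * q + m) * ((1 - x) * Q.eval x)) with hφ
      have hφcont : Continuous fun x : ℝ => x ^ (2 * q + m) * ((1 - x) * Q.eval x) := by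
        fun_prop
      have hφint : IntervalIntegrable φ volume (-1) 1 :=
        weight_integrable' α hα _ hφcont
      have hφnint : IntervalIntegrable (fun x => φ (-x)) volume (-1) 1 := by
        have h := (IntervalIntegrable.iff_comp_neg).mp hφint
        simp only [neg_neg] at h
        exact h.symm
      have hsplit : ∀ x : ℝ, (1 - x ^ 2) ^ α * (x ^ (2 * q + m) * J.eval x)
          = φ x + φ (-x) := by
        intro x
        rw [hφ]
        simp only
        have hpow : (-x) ^ (2 * q + m) = - x ^ (2 * q + m) := by
          rw [hi, show 2 * q + (2 * i + 1) = 2 * (q + i) + 1 by ring]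
          rw [pow_succ, pow_succ, pow_mul, pow_mul, neg_sq]
          ring
        rw [hJeval x, neg_sq, hpow]
        ring
      have : (∫ x in (-1:ℝ)..1, (1 - x ^ 2) ^ α * (x ^ (2 * q + m) * J.eval x))
          = (∫ x in (-1:ℝ)..1, φ x) + ∫ x in (-1:ℝ)..1, φ (-x) := by
        rw [← intervalIntegral.integral_add hφint hφnint]
        exact intervalIntegral.integral_congr fun x _ => hsplit x
      rw [this]
      have hrefl : ∫ x in (-1:ℝ)..1, φ (-x) = ∫ x in (-1:ℝ)..1, φ x := by
        have h := intervalIntegral.integral_comp_neg (a := (-1:ℝ)) (b := 1) φ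
        simp only [neg_neg] at h
        exact h
      rw [hrefl]
      have hφ0 : ∫ x in (-1:ℝ)..1, φ x = 0 := by
        have := hQ (2 * i) (by omega)
        rw [← this]
        apply intervalIntegral.integral_congr
        intro x _
        rw [hφ]
        simp only
        rw [hi, show 2 * q + (2 * i + 1) = (2 * q + 1) + 2 * i by ring, pow_add]
        ring
      rw [hφ0]; ring
  -- the quadratic form vanishes
  have hsum : ∫ x in (-1:ℝ)..1, (1 - x ^ 2) ^ α * (x ^ (2 * q) * (J.eval x) ^ 2) = 0 := by
    have expand : ∀ x : ℝ, (1 - x ^ 2) ^ α * (x ^ (2 * q) * (J.eval x) ^ 2)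
        = ∑ m ∈ Finset.range (J.natDegree + 1),
          J.coeff m * ((1 - x ^ 2) ^ α * (x ^ (2 * q + m) * J.eval x)) := by
      intro x
      have hev : J.eval x = ∑ m ∈ Finset.range (J.natDegree + 1), J.coeff m * x ^ m :=
        eval_eq_sum_range x
      calc (1 - x ^ 2) ^ α * (x ^ (2 * q) * (J.eval x) ^ 2)
          = (∑ m ∈ Finset.range (J.natDegree + 1), J.coeff m * x ^ m) *
            ((1 - x ^ 2) ^ α * (x ^ (2 * q) * J.eval x)) := by rw [← hev]; ring
        _ = ∑ m ∈ Finset.range (J.natDegree + 1),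
              J.coeff m * ((1 - x ^ 2) ^ α * (x ^ (2 * q + m) * J.eval x)) := by
            rw [Finset.sum_mul]
            apply Finset.sum_congr rfl
            intro m _
            rw [pow_add]
            ring
    rw [intervalIntegral.integral_congr (fun x _ => expand x)]
    rw [intervalIntegral.integral_finset_sum]
    · apply Finset.sum_eq_zero
      intro m hm
      rw [Finset.mem_range] at hm
      have hm' : m ≤ 2 * n + 2 := by omega
      rw [intervalIntegral.integral_const_mul, key m hm', mul_zero]
    · intro m hm
      have : IntervalIntegrable
          (fun x => (1 - x ^ 2) ^ α * (x ^ (2 * q + m) * J.eval x)) volume (-1) 1 :=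
        weight_integrable' α hα _ (by fun_prop)
      exact this.const_mul _
  -- nonnegativity ⇒ a.e. zero
  have hint : IntervalIntegrable
      (fun x => (1 - x ^ 2) ^ α * (x ^ (2 * q) * (J.eval x) ^ 2)) volume (-1) 1 :=
    weight_integrable' α hα _ (by fun_prop)
  have hnonneg : 0 ≤ᵐ[volume.restrict (Ioc (-1:ℝ) 1)]
      fun x => (1 - x ^ 2) ^ α * (x ^ (2 * q) * (J.eval x) ^ 2) := by
    refine (ae_restrict_iff' measurableSet_Ioc).2 (Filter.Eventually.of_forall ?_)
    intro x hx
    have h1 : (0:ℝ) ≤ 1 - x ^ 2 := by nlinarith [hx.1, hx.2]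
    have h2 := Real.rpow_nonneg h1 α
    have h3 : (0:ℝ) ≤ x ^ (2 * q) := by
      rw [pow_mul]; exact pow_nonneg (sq_nonneg x) q
    exact mul_nonneg h2 (mul_nonneg h3 (sq_nonneg _))
  have hae := (intervalIntegral.integral_eq_zero_iff_of_le_of_nonneg_ae
    (by norm_num : (-1:ℝ) ≤ 1) hnonneg hint).mp hsum
  have hae' : ∀ᵐ x ∂(volume : Measure ℝ), x ∈ Ioc (-1:ℝ) 1 →
      (1 - x ^ 2) ^ α * (x ^ (2 * q) * (J.eval x) ^ 2) = 0 :=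
    (ae_restrict_iff' measurableSet_Ioc).1 hae
  -- roots of J include almost all of (0,1)
  have hJ0 : J = 0 := by
    by_contra hne
    have hfin : {x : ℝ | J.IsRoot x}.Finite := Polynomial.finite_setOf_isRoot hne
    have hnull : volume {x : ℝ | ¬ (x ∈ Ioc (-1:ℝ) 1 →
        (1 - x ^ 2) ^ α * (x ^ (2 * q) * (J.eval x) ^ 2) = 0)} = 0 := hae'
    have hsub : Ioo (0:ℝ) 1 \ {x : ℝ | J.IsRoot x} ⊆
        {x : ℝ | ¬ (x ∈ Ioc (-1:ℝ) 1 →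
          (1 - x ^ 2) ^ α * (x ^ (2 * q) * (J.eval x) ^ 2) = 0)} := by
      intro x hx
      obtain ⟨hx1, hx2⟩ := hx
      simp only [mem_setOf_eq, not_forall]
      refine ⟨⟨by linarith [hx1.1], le_of_lt hx1.2⟩, ?_⟩
      have hpos : (0:ℝ) < 1 - x ^ 2 := by nlinarith [hx1.1, hx1.2]
      have h1 : (0:ℝ) < (1 - x ^ 2) ^ α := Real.rpow_pos_of_pos hpos α
      have h2 : (0:ℝ) < x ^ (2 * q) := pow_pos hx1.1 _
      have h3 : (0:ℝ) < (J.eval x) ^ 2 := by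
        have : J.eval x ≠ 0 := hx2
        positivity
      positivity
    have h0 : volume (Ioo (0:ℝ) 1 \ {x : ℝ | J.IsRoot x}) = 0 :=
      measure_mono_null hsub hnull
    have h1 : volume (Ioo (0:ℝ) 1 ∩ {x : ℝ | J.IsRoot x}) = 0 :=
      measure_mono_null inter_subset_right (hfin.measure_zero volume)
    have : volume (Ioo (0:ℝ) 1) = 0 := by
      have hcover : Ioo (0:ℝ) 1 ⊆
          (Ioo (0:ℝ) 1 ∩ {x : ℝ | J.IsRoot x}) ∪ (Ioo (0:ℝ) 1 \ {x : ℝ | J.IsRoot x}) := by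
        intro x hx
        by_cases h : x ∈ {x : ℝ | J.IsRoot x}
        · exact Or.inl ⟨hx, h⟩
        · exact Or.inr ⟨hx, h⟩
      refine le_antisymm ?_ zero_le
      calc volume (Ioo (0:ℝ) 1) ≤ volume ((Ioo (0:ℝ) 1 ∩ {x : ℝ | J.IsRoot x}) ∪
            (Ioo (0:ℝ) 1 \ {x : ℝ | J.IsRoot x})) := measure_mono hcover
        _ ≤ volume (Ioo (0:ℝ) 1 ∩ {x : ℝ | J.IsRoot x}) +
            volume (Ioo (0:ℝ) 1 \ {x : ℝ | J.IsRoot x}) := measure_union_le _ _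
        _ = 0 := by rw [h0, h1, add_zero]
    rw [Real.volume_Ioo] at this
    norm_num at this
  -- conclude
  have := hJeval 1
  rw [hJ0] at this
  simp at this
  linarith
end
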